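/- Let k, s be positive integers and G₀, H₀ graphs containing no K_s. Then there exist graphs G and H containing no K_s such that: whenever the intermediate edges of the pair graph G ∗ H are coloured with k colours, there exist copies G₀ ⊆ G and H₀ ⊆ H such that all edges between these copies receive the same colour. -/

import Mathlib

set_option linter.unusedSectionVars false

open Function

/- We prove the statement via the vertex Folkman theorem, applied twice (to `G₀` with `k`
colors, then to `H₀` with `k ^ n` colors).  The vertex Folkman theorem is proved by a
partite amalgamation construction. -/

section StepConstr

variable {β : Type} {N : ℕ} (parts : β → Fin N) (pp : Fin N) (Y : Type)

/-- Vertex type of the amalgamated system: the shared new part `Y`, plus a private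
copy of the rest of the old system for every embedding of the old part into `Y`. -/
abbrev SVert := Y ⊕ (({v : β // parts v = pp} ↪ Y) × {v : β // parts v ≠ pp})

variable {parts pp Y}

/-- The copy of the old system indexed by `φ`. -/
def sIota (φ : {v : β // parts v = pp} ↪ Y) (v : β) : SVert parts pp Y :=
  if h : parts v = pp then Sum.inl (φ ⟨v, h⟩) else Sum.inr (φ, ⟨v, h⟩)

lemma sIota_injective (φ : {v : β // parts v = pp} ↪ Y) : Function.Injective (sIota φ) := by
  intro u v h
  unfold sIota at h
  by_cases hu : parts u = pp <;> by_cases hv : parts v = pp <;>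
    simp only [hu, hv, dif_pos, dif_neg, not_false_iff] at h
  · exact congrArg Subtype.val (φ.injective (Sum.inl.inj h))
  · exact absurd h (by simp)
  · exact absurd h (by simp)
  · exact congrArg Subtype.val (Prod.ext_iff.mp (Sum.inr.inj h)).2

def sParts : SVert parts pp Y → Fin N := Sum.elim (fun _ => pp) (fun w => parts w.2.1)

lemma sParts_sIota (φ : {v : β // parts v = pp} ↪ Y) (v : β) :
    sParts (sIota φ v) = parts v := by
  unfold sIota sParts
  by_cases h : parts v = pp <;> simp [h]

lemma sIota_eq {φ ψ : {v : β // parts v = pp} ↪ Y} {u w : β}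
    (h : sIota φ u = sIota ψ w) :
    (∃ (hu : parts u = pp) (hw : parts w = pp), φ ⟨u, hu⟩ = ψ ⟨w, hw⟩) ∨
    (parts u ≠ pp ∧ φ = ψ ∧ u = w) := by
  unfold sIota at h
  by_cases hu : parts u = pp <;> by_cases hw : parts w = pp <;>
    simp only [hu, hw, dif_pos, dif_neg, not_false_iff] at h
  · exact Or.inl ⟨hu, hw, Sum.inl.inj h⟩
  · exact absurd h (by simp)
  · exact absurd h (by simp)
  · obtain ⟨h1, h2⟩ := Prod.ext_iff.mp (Sum.inr.inj h)
    exact Or.inr ⟨hu, h1, congrArg Subtype.val h2⟩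

end StepConstr

def GoodSys (γ : Type) (s N a : ℕ) (G₀ : SimpleGraph (Fin a)) (p : ℕ) : Prop :=
  ∃ (β : Type) (_ : Fintype β) (G : SimpleGraph β) (parts : β → Fin N),
    G.CliqueFree s ∧
    (∀ u v, G.Adj u v → parts u ≠ parts v) ∧
    ∀ c : β → γ, ∃ d : Fin N → γ,
      ∀ e : Fin a → Fin N, StrictMono e →
        ∃ f : Fin a → β, Function.Injective f ∧
          (∀ x y, G₀.Adj x y → G.Adj (f x) (f y)) ∧
          (∀ i, parts (f i) = e i) ∧
          ∀ i, (e i : ℕ) < p → c (f i) = d (e i)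

variable {γ : Type} [Fintype γ] [Nonempty γ] {s N a : ℕ} {G₀ : SimpleGraph (Fin a)}

lemma goodSys_zero (hs : 2 ≤ s) (hG₀ : G₀.CliqueFree s) :
    GoodSys γ s N a G₀ 0 := by
  classical
  set E := {e : Fin a → Fin N // StrictMono e} with hE
  refine ⟨E × Fin a, inferInstance,
    { Adj := fun u v => u.1 = v.1 ∧ G₀.Adj u.2 v.2
      symm := ⟨fun u v h => ⟨h.1.symm, h.2.symm⟩⟩
      loopless := ⟨fun u h => G₀.loopless.irrefl _ h.2⟩ }, fun u => u.1.1 u.2, ?_, ?_, ?_⟩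
  · -- clique free
    intro t ht
    have hcard : 2 ≤ t.card := by rw [ht.2]; exact hs
    obtain ⟨u, hu⟩ := Finset.card_pos.mp (by omega : 0 < t.card)
    have hfst : ∀ w ∈ t, w.1 = u.1 := by
      intro w hw
      by_cases hwu : w = u
      · rw [hwu]
      · exact (ht.1 hw hu hwu).1
    refine hG₀ (t.image Prod.snd) ⟨?_, ?_⟩
    · intro x hx y hy hxy
      simp only [Finset.coe_image, Set.mem_image, Finset.mem_coe] at hx hy
      obtain ⟨w₁, hw₁, rfl⟩ := hx
      obtain ⟨w₂, hw₂, rfl⟩ := hy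
      have hne : w₁ ≠ w₂ := fun h => hxy (by rw [h])
      exact (ht.1 hw₁ hw₂ hne).2
    · rw [Finset.card_image_of_injOn, ht.2]
      intro w₁ hw₁ w₂ hw₂ hsnd
      have : w₁.1 = w₂.1 := by rw [hfst w₁ hw₁, hfst w₂ hw₂]
      exact Prod.ext this hsnd
  · -- parts independence
    rintro ⟨e, x⟩ ⟨e', y⟩ ⟨h1, h2⟩ hpar
    simp only at h1 hpar
    subst h1
    exact G₀.loopless.irrefl _ (by rwa [e.2.injective hpar] at h2)
  · -- invariant
    intro c
    refine ⟨fun _ => Classical.arbitrary γ, fun e he => ⟨fun i => (⟨e, he⟩, i), ?_, ?_, ?_, ?_⟩⟩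
    · intro i j h
      exact (Prod.ext_iff.mp h).2
    · exact fun x y h => ⟨rfl, h⟩
    · intro i; rfl
    · intro i h; omega

lemma goodSys_step (hs : 2 ≤ s) {p : ℕ} (hp : p < N) (h : GoodSys γ s N a G₀ p) :
    GoodSys γ s N a G₀ (p + 1) := by
  classical
  obtain ⟨β, fβ, G, parts, hcf, hindep, hinv⟩ := h
  set pp : Fin N := ⟨p, hp⟩ with hpp
  set Y := Fin (Fintype.card γ * Fintype.card {v : β // parts v = pp} + 1) with hY
  -- the new graph
  set G' : SimpleGraph (SVert parts pp Y) :=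
    { Adj := fun u' v' => ∃ φ u v, G.Adj u v ∧ u' = sIota φ u ∧ v' = sIota φ v
      symm := by refine ⟨?_⟩; rintro u' v' ⟨φ, u, v, hadj, rfl, rfl⟩; exact ⟨φ, v, u, hadj.symm, rfl, rfl⟩
      loopless := by
        refine ⟨?_⟩; rintro u' ⟨φ, u, v, hadj, rfl, h2⟩
        cases sIota_injective φ h2
        exact G.loopless.irrefl u hadj } with hG'
  -- adjacency within one copy reflects adjacency in the old graph
  have adj_reflect : ∀ (φ) (u v : β), G'.Adj (sIota φ u) (sIota φ v) → G.Adj u v := by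
    rintro φ u v ⟨ψ, u₁, v₁, hadj, e₁, e₂⟩
    have hne := hindep _ _ hadj
    rcases sIota_eq e₁ with ⟨hu, hu₁, he⟩ | ⟨hu, hfe, rfl⟩
    · -- parts u = pp, parts u₁ = pp, hence parts v₁ ≠ pp
      have hv₁ : parts v₁ ≠ pp := by rw [hu₁] at hne; exact fun hh => hne hh.symm
      rcases sIota_eq e₂ with ⟨hv, hv₁', _⟩ | ⟨hv, hfe, rfl⟩
      · exact absurd hv₁' hv₁
      · -- φ = ψ, v = v₁
        subst hfe
        have := φ.injective he
        rw [show u = u₁ from congrArg Subtype.val this]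
        exact hadj
    · -- parts u₁ ≠ pp, φ = ψ, u = u₁
      subst hfe
      rcases sIota_eq e₂ with ⟨hv, hv₁', he⟩ | ⟨hv, _, rfl⟩
      · have := φ.injective he
        rw [show v = v₁ from congrArg Subtype.val this]
        exact hadj
      · exact hadj
  have adj_range : ∀ (φ w') (v₀ : {v : β // parts v ≠ pp}),
      G'.Adj w' (Sum.inr (φ, v₀)) → w' ∈ Set.range (sIota φ) := by
    rintro φ w' v₀ ⟨ψ, u, v, hadj, rfl, e₂⟩
    have hv : parts v ≠ pp := by
      intro hv
      rw [show sIota ψ v = Sum.inl (ψ ⟨v, hv⟩) from by unfold sIota; rw [dif_pos]] at e₂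
      exact absurd e₂ (by simp)
    rw [show sIota ψ v = Sum.inr (ψ, ⟨v, hv⟩) from by unfold sIota; rw [dif_neg hv]] at e₂
    have h1 : φ = ψ := congrArg Prod.fst (Sum.inr.inj e₂)
    exact ⟨u, by rw [h1]⟩
  have inr_mem_range : ∀ (φ) (v₀ : {v : β // parts v ≠ pp}),
      (Sum.inr (φ, v₀) : SVert parts pp Y) ∈ Set.range (sIota φ) := by
    intro φ v₀
    exact ⟨v₀.1, by unfold sIota; rw [dif_neg v₀.2]⟩
  refine ⟨SVert parts pp Y, inferInstance, G', sParts, ?_, ?_, ?_⟩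
  · -- clique free
    intro t ht
    have hcard : 2 ≤ t.card := by rw [ht.2]; exact hs
    -- find an inr element
    have hinr : ∃ φ v₀, Sum.inr (φ, v₀) ∈ t := by
      by_contra hco
      push_neg at hco
      obtain ⟨u', hu', v', hv', hne⟩ := Finset.one_lt_card.mp (by omega : 1 < t.card)
      obtain ⟨ψ, u, v, hadj, e₁, e₂⟩ := ht.1 hu' hv' hne
      -- both endpoints must be inl
      have hu2 : parts u = pp := by
        by_contra hh
        rw [show sIota ψ u = Sum.inr (ψ, ⟨u, hh⟩) from by unfold sIota; rw [dif_neg hh]] at e₁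
        exact hco ψ ⟨u, hh⟩ (e₁ ▸ hu')
      have hv2 : parts v = pp := by
        by_contra hh
        rw [show sIota ψ v = Sum.inr (ψ, ⟨v, hh⟩) from by unfold sIota; rw [dif_neg hh]] at e₂
        exact hco ψ ⟨v, hh⟩ (e₂ ▸ hv')
      exact hindep _ _ hadj (hu2.trans hv2.symm)
    obtain ⟨φ, v₀, hmem⟩ := hinr
    have hsub : ∀ w' ∈ t, w' ∈ Set.range (sIota φ) := by
      intro w' hw'
      by_cases hwe : w' = Sum.inr (φ, v₀)
      · rw [hwe]; exact inr_mem_range φ v₀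
      · exact adj_range φ w' v₀ (ht.1 hw' hmem hwe)
    set t' : Finset β := t.preimage (sIota φ) ((sIota_injective φ).injOn)
      with ht'
    have himg : t'.image (sIota φ) = t := by
      apply Finset.Subset.antisymm
      · intro w hw
        obtain ⟨u, hu, rfl⟩ := Finset.mem_image.mp hw
        exact Finset.mem_preimage.mp hu
      · intro w hw
        obtain ⟨u, rfl⟩ := hsub w hw
        exact Finset.mem_image.mpr ⟨u, Finset.mem_preimage.mpr hw, rfl⟩
    refine hcf t' ⟨?_, ?_⟩
    · intro u hu v hv huv
      refine adj_reflect φ u v (ht.1 ?_ ?_ ?_)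
      · rw [← himg]; exact Finset.mem_image_of_mem _ hu
      · rw [← himg]; exact Finset.mem_image_of_mem _ hv
      · exact fun hh => huv (sIota_injective φ hh)
    · rw [← ht.2, ← himg, Finset.card_image_of_injective _ (sIota_injective φ)]
  · -- part independence
    rintro u' v' ⟨φ, u, v, hadj, rfl, rfl⟩
    rw [sParts_sIota, sParts_sIota]
    exact hindep _ _ hadj
  · -- the invariant
    intro c'
    -- pigeonhole on the new part
    have hvp : (pp : ℕ) = p := rfl
    obtain ⟨colp, hcolp⟩ := Fintype.exists_lt_card_fiber_of_mul_lt_card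
      (f := fun y : Y => c' (Sum.inl y)) (n := Fintype.card {v : β // parts v = pp})
      (by rw [show Fintype.card Y = Fintype.card γ * Fintype.card {v : β // parts v = pp} + 1
                from Fintype.card_fin _]
          omega)
    obtain ⟨φ₀, hφ₀⟩ := Function.Embedding.exists_of_card_le_finset (le_of_lt hcolp)
    have hφ₀c : ∀ v : {v : β // parts v = pp}, c' (Sum.inl (φ₀ v)) = colp := by
      intro v
      have := hφ₀ ⟨v, rfl⟩
      simp only [Finset.coe_filter, Set.mem_setOf_eq, Finset.mem_univ, true_and] at this
      exact this
    obtain ⟨d, hd⟩ := hinv (fun v => c' (sIota φ₀ v))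
    refine ⟨Function.update d pp colp, fun e he => ?_⟩
    obtain ⟨f, hfinj, hfhom, hfparts, hfcol⟩ := hd e he
    refine ⟨sIota φ₀ ∘ f, (sIota_injective φ₀).comp hfinj, ?_, ?_, ?_⟩
    · exact fun x y hxy => ⟨φ₀, f x, f y, hfhom x y hxy, rfl, rfl⟩
    · intro i; rw [Function.comp_apply, sParts_sIota]; exact hfparts i
    · intro i hi
      by_cases hip : (e i : ℕ) < p
      · have hne : e i ≠ pp := fun hh => by rw [hh] at hip; omega
        rw [Function.comp_apply, hfcol i hip, Function.update_of_ne hne]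
      · have hie : e i = pp := Fin.ext (by omega)
        have hpi : parts (f i) = pp := by rw [hfparts i, hie]
        rw [Function.comp_apply,
          show sIota φ₀ (f i) = Sum.inl (φ₀ ⟨f i, hpi⟩) from by unfold sIota; rw [dif_pos],
          hφ₀c, hie, Function.update_self]


lemma exists_host (hs : 1 ≤ s) (hG₀ : G₀.CliqueFree s) (γ : Type) [Fintype γ] [Nonempty γ] :
    ∃ (n : ℕ) (G : SimpleGraph (Fin n)), G.CliqueFree s ∧
      ∀ c : Fin n → γ, ∃ f : Fin a → Fin n, Function.Injective f ∧
        (∀ x y, G₀.Adj x y → G.Adj (f x) (f y)) ∧ ∃ col, ∀ i, c (f i) = col := by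
  classical
  by_cases ha : a = 0
  · subst ha
    refine ⟨0, ⊥, fun t ht => ?_, fun c => ?_⟩
    · obtain ⟨v, -⟩ := Finset.card_pos.mp (by rw [ht.2]; omega)
      exact v.elim0
    · exact ⟨Fin.elim0, fun i => i.elim0, fun x => x.elim0,
        Classical.arbitrary γ, fun i => i.elim0⟩
  · have hs2 : 2 ≤ s := by
      rcases Nat.lt_or_ge s 2 with h | h
      · exfalso
        have hv : (0 : ℕ) < a := Nat.pos_of_ne_zero ha
        have hs1 : s = 1 := by omega
        exact hG₀ {⟨0, hv⟩} ⟨by simp, by simp [hs1]⟩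
      · exact h
    set N := Fintype.card γ * (a - 1) + 1 with hN
    have good : ∀ p, p ≤ N → GoodSys γ s N a G₀ p := by
      intro p
      induction p with
      | zero => exact fun _ => goodSys_zero hs2 hG₀
      | succ q ih => exact fun hq => goodSys_step hs2 (by omega) (ih (by omega))
    obtain ⟨β, fβ, G, parts, hcf, hindep, hinv⟩ := good N le_rfl
    letI := fβ
    set eq := Fintype.equivFin β with heq
    refine ⟨Fintype.card β, G.comap eq.symm, fun t ht => ?_, fun c => ?_⟩
    · refine hcf (t.image eq.symm) ⟨?_, ?_⟩
      · intro u hu v hv huv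
        simp only [Finset.coe_image, Set.mem_image, Finset.mem_coe] at hu hv
        obtain ⟨i, hi, rfl⟩ := hu
        obtain ⟨j, hj, rfl⟩ := hv
        exact ht.1 hi hj fun hh => huv (by rw [hh])
      · rw [Finset.card_image_of_injective _ eq.symm.injective, ht.2]
    · obtain ⟨d, hd⟩ := hinv (c ∘ eq)
      -- pigeonhole: a parts of equal part-color
      obtain ⟨col, hcol⟩ := Fintype.exists_lt_card_fiber_of_mul_lt_card
        (f := d) (n := a - 1) (by rw [Fintype.card_fin]; omega)
      obtain ⟨t, hts, htcard⟩ := Finset.exists_subset_card_eq (by omega :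
        a ≤ ({q | d q = col} : Finset (Fin N)).card) 
      set e := t.orderEmbOfFin htcard with he
      obtain ⟨f, hfinj, hfhom, hfparts, hfcol⟩ := hd e e.strictMono
      refine ⟨eq ∘ f, eq.injective.comp hfinj, ?_, col, ?_⟩
      · intro x y hxy
        simpa using hfhom x y hxy
      · intro i
        have h1 : (c ∘ eq) (f i) = d (e i) := hfcol i (e i).isLt
        have h2 : e i ∈ t := Finset.orderEmbOfFin_mem t htcard i
        have h3 := hts h2
        simp only [Finset.mem_filter, Finset.mem_univ, true_and] at h3
        calc c ((eq ∘ f) i) = (c ∘ eq) (f i) := rfl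
          _ = d (e i) := h1
          _ = col := h3

theorem stmt_14 (k s : ℕ) (hk : 1 ≤ k) (hs : 1 ≤ s)
    {a b : ℕ} (G₀ : SimpleGraph (Fin a)) (H₀ : SimpleGraph (Fin b))
    (hG₀ : G₀.CliqueFree s) (hH₀ : H₀.CliqueFree s) :
    ∃ (n m : ℕ) (G : SimpleGraph (Fin n)) (H : SimpleGraph (Fin m)),
      G.CliqueFree s ∧ H.CliqueFree s ∧
      -- whenever the intermediate edges of the pair graph G ∗ H are k-coloured,
      -- there are copies of G₀ in G and H₀ in H with all intermediate edges monochromatic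
      ∀ c : Fin n → Fin m → Fin k,
        ∃ (f : Fin a → Fin n) (g : Fin b → Fin m),
          Function.Injective f ∧ Function.Injective g ∧
          (∀ u v : Fin a, G₀.Adj u v → G.Adj (f u) (f v)) ∧
          (∀ u v : Fin b, H₀.Adj u v → H.Adj (g u) (g v)) ∧
          ∃ col : Fin k, ∀ (u : Fin a) (v : Fin b), c (f u) (g v) = col := by
  have hkne : Nonempty (Fin k) := ⟨⟨0, hk⟩⟩
  -- host for G₀ with colors `Fin k`
  obtain ⟨n, G, hGcf, hGarr⟩ := exists_host hs hG₀ (Fin k)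
  -- host for H₀ with colors `Fin n → Fin k`
  obtain ⟨m, H, hHcf, hHarr⟩ := exists_host hs hH₀ (Fin n → Fin k)
  refine ⟨n, m, G, H, hGcf, hHcf, fun c => ?_⟩
  obtain ⟨g, hginj, hghom, P, hP⟩ := hHarr (fun v u => c u v)
  obtain ⟨f, hfinj, hfhom, col, hcol⟩ := hGarr P
  exact ⟨f, g, hfinj, hginj, hfhom, hghom, col, fun u v => by
    have := congrFun (hP v) (f u)
    rw [this, hcol]⟩
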